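/- arXiv:1804.06190 — 2 statements merged into one kernel-verified Lean document; each statement's English description precedes it below -/
import Mathlib

section
/- For every positive integers k and n, and any fixed continuous paths β₁,…,β_k : [0,1] → ℝⁿ, the set of loops α : [0,1] → ℝⁿ with α(0)=α(1)=0 satisfying ∫₀¹ ‖α(t)−β_j(t)‖² dt = ∫₀¹ ‖α(1−t)−β_j(t)‖² dt for all j, and with α ≠ α∘(t ↦ 1−t), is nonempty. -/
open MeasureTheory intervalIntegral

noncomputable def tent (a b t : ℝ) : ℝ := max 0 (min (t - a) (b - t))

lemma tent_continuous (a b : ℝ) : Continuous fun t => tent a b t := by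
  unfold tent; fun_prop

lemma tent_eq_zero {a b t : ℝ} (h : t ≤ a ∨ b ≤ t) : tent a b t = 0 := by
  rcases h with h | h
  · exact max_eq_left ((min_le_left _ _).trans (by linarith))
  · exact max_eq_left ((min_le_right _ _).trans (by linarith))

lemma tent_mid {a b : ℝ} (h : a < b) : tent a b ((a + b) / 2) = (b - a) / 2 := by
  unfold tent
  rw [show (a + b) / 2 - a = (b - a) / 2 by ring, show b - (a + b) / 2 = (b - a) / 2 by ring,
    min_self, max_eq_right (by linarith)]

/-- For every positive `k`, `n` and continuous paths `β j : [0,1] → ℝⁿ`, there is a loop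
`α` at `0` with `∫₀¹ ‖α t - β j t‖² dt = ∫₀¹ ‖α (1-t) - β j t‖² dt` for all `j`,
which is not equal to its own reverse on `[0,1]`. -/
theorem stmt0 (k n : ℕ) (hk : 0 < k) (hn : 0 < n)
    (β : Fin k → ℝ → EuclideanSpace ℝ (Fin n)) (hβ : ∀ j, Continuous (β j)) :
    ∃ α : ℝ → EuclideanSpace ℝ (Fin n), Continuous α ∧ α 0 = 0 ∧ α 1 = 0 ∧
      (∀ j, (∫ t in (0:ℝ)..1, ‖α t - β j t‖ ^ 2) = ∫ t in (0:ℝ)..1, ‖α (1 - t) - β j t‖ ^ 2) ∧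
      ∃ t ∈ Set.Icc (0:ℝ) 1, α t ≠ α (1 - t) := by
  set D : ℝ := 4 * (k + 1) with hDdef
  have hD : (0:ℝ) < D := by positivity
  set φ : Fin (k + 1) → ℝ → ℝ :=
    fun m t => tent ((2 * (m : ℕ) + 1) / D) ((2 * (m : ℕ) + 2) / D) t with hφdef
  set ψ : Fin (k + 1) → ℝ → ℝ := fun m t => φ m t - φ m (1 - t) with hψdef
  have hφcont : ∀ m, Continuous (φ m) := fun m => tent_continuous _ _
  have hψcont : ∀ m, Continuous (ψ m) := fun m =>
    (hφcont m).sub ((hφcont m).comp (continuous_const.sub continuous_id))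
  have hψskew : ∀ m t, ψ m (1 - t) = -ψ m t := by
    intro m t
    simp only [hψdef, sub_sub_cancel]
    ring
  set v : EuclideanSpace ℝ (Fin n) := EuclideanSpace.single ⟨0, hn⟩ 1 with hvdef
  have hv : ‖v‖ = 1 := by simp [hvdef, EuclideanSpace.norm_single]
  have hvne : v ≠ 0 := by
    intro h; rw [h] at hv; simp at hv
  set g : Fin k → ℝ → ℝ := fun j t => inner ℝ v (β j t) with hgdef
  have hgcont : ∀ j, Continuous (g j) := fun j => (continuous_const.inner (hβ j))
  -- the linear map
  set f : (Fin (k + 1) → ℝ) →ₗ[ℝ] (Fin k → ℝ) :=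
    { toFun := fun a j => ∑ m, a m * (∫ t in (0:ℝ)..1, ψ m t * g j t)
      map_add' := by
        intro a b; funext j
        simp [add_mul, Finset.sum_add_distrib]
      map_smul' := by
        intro r a; funext j
        simp [Finset.mul_sum, mul_assoc] } with hfdef
  obtain ⟨a, ha0, haf⟩ : ∃ a, a ≠ 0 ∧ f a = 0 := by
    by_contra h
    push_neg at h
    have hinj : Function.Injective f := by
      rw [← LinearMap.ker_eq_bot, LinearMap.ker_eq_bot']
      intro a hfa
      by_contra ha
      exact h a ha hfa
    have := LinearMap.finrank_le_finrank_of_injective hinj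
    simp [Module.finrank_pi] at this
  set c : ℝ → ℝ := fun t => ∑ m, a m * ψ m t with hcdef
  have hccont : Continuous c := continuous_finset_sum _ fun m _ => continuous_const.mul (hψcont m)
  have hcskew : ∀ t, c (1 - t) = - c t := by
    intro t
    simp only [hcdef, hψskew, mul_neg, Finset.sum_neg_distrib]
  set α : ℝ → EuclideanSpace ℝ (Fin n) := fun t => c t • v with hαdef
  have hαcont : Continuous α := hccont.smul continuous_const
  -- boundary values
  have hφ0 : ∀ m, φ m 0 = 0 := by
    intro m
    apply tent_eq_zero
    left; positivity
  have hφ1 : ∀ m, φ m 1 = 0 := by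
    intro m
    apply tent_eq_zero
    right
    rw [div_le_one hD]
    have : (m : ℝ) ≤ k := by exact_mod_cast m.is_le
    simp only [hDdef]; linarith
  have hc0 : c 0 = 0 := by
    simp [hcdef, hψdef, hφ0, hφ1]
  have hc1 : c 1 = 0 := by
    simp [hcdef, hψdef, hφ0, hφ1]
  -- key integral vanishing
  have hkey : ∀ j, (∫ t in (0:ℝ)..1, c t * g j t) = 0 := by
    intro j
    have h1 : (∫ t in (0:ℝ)..1, c t * g j t)
        = ∑ m, ∫ t in (0:ℝ)..1, a m * (ψ m t * g j t) := by
      rw [← intervalIntegral.integral_finset_sum]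
      · congr 1; funext t
        simp only [hcdef, Finset.sum_mul, mul_assoc]
      · intro m _
        exact (continuous_const.mul ((hψcont m).mul (hgcont j))).intervalIntegrable _ _
    rw [h1]
    have h2 : ∀ m : Fin (k+1), (∫ t in (0:ℝ)..1, a m * (ψ m t * g j t))
        = a m * ∫ t in (0:ℝ)..1, ψ m t * g j t := fun m =>
      intervalIntegral.integral_const_mul _ _
    simp only [h2]
    have := congrFun haf j
    simpa [hfdef] using this
  refine ⟨α, hαcont, by simp [hαdef, hc0], by simp [hαdef, hc1], ?_, ?_⟩
  · -- integral equality
    intro j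
    have hdiff : ∀ t, ‖α t - β j t‖ ^ 2
        = ‖α (1 - t) - β j t‖ ^ 2 + (-4) * (c t * g j t) := by
      intro t
      rw [norm_sub_sq_real, norm_sub_sq_real]
      have e1 : α t = c t • v := rfl
      have e2 : α (1 - t) = (- c t) • v := by rw [hαdef]; simp [hcskew t]
      rw [e1, e2, real_inner_smul_left, real_inner_smul_left, norm_smul, norm_smul]
      simp only [hv, mul_one, Real.norm_eq_abs, mul_pow, sq_abs, ← hgdef]
      ring
    have hRint : IntervalIntegrable (fun t => ‖α (1 - t) - β j t‖ ^ 2) volume 0 1 :=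
      (((hαcont.comp (continuous_const.sub continuous_id)).sub (hβ j)).norm.pow 2).intervalIntegrable _ _
    have hgint : IntervalIntegrable (fun t => (-4) * (c t * g j t)) volume 0 1 :=
      (continuous_const.mul (hccont.mul (hgcont j))).intervalIntegrable _ _
    calc (∫ t in (0:ℝ)..1, ‖α t - β j t‖ ^ 2)
        = ∫ t in (0:ℝ)..1, (‖α (1 - t) - β j t‖ ^ 2 + (-4) * (c t * g j t)) := by
          congr 1; funext t; exact hdiff t
      _ = (∫ t in (0:ℝ)..1, ‖α (1 - t) - β j t‖ ^ 2)
          + ∫ t in (0:ℝ)..1, (-4) * (c t * g j t) := intervalIntegral.integral_add hRint hgint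
      _ = ∫ t in (0:ℝ)..1, ‖α (1 - t) - β j t‖ ^ 2 := by
          rw [intervalIntegral.integral_const_mul, hkey j]; ring
  · -- asymmetry witness
    obtain ⟨m, hm⟩ : ∃ m, a m ≠ 0 := by
      by_contra h
      push_neg at h
      exact ha0 (funext h)
    set t₀ : ℝ := (4 * (m : ℕ) + 3) / (2 * D) with ht₀def
    have hmk : (m : ℝ) ≤ k := by exact_mod_cast m.is_le
    have ht₀mem : t₀ ∈ Set.Icc (0:ℝ) 1 := by
      constructor
      · positivity
      · rw [div_le_one (by positivity)]
        simp only [hDdef]; linarith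
    -- φ m t₀ is positive
    have hmid : t₀ = ((2 * (m : ℕ) + 1) / D + (2 * (m : ℕ) + 2) / D) / 2 := by
      rw [ht₀def]; ring
    have hφm : φ m t₀ = 1 / (2 * D) := by
      rw [hφdef]
      simp only
      rw [hmid, tent_mid (by gcongr; linarith)]
      rw [show (2 * ((m:ℕ):ℝ) + 2) / D - (2 * ((m:ℕ):ℝ) + 1) / D = 1 / D by
        field_simp; ring]
      rw [div_div, one_div, one_div, mul_comm]
    -- φ i t₀ = 0 for i ≠ m
    have hφi : ∀ i : Fin (k + 1), i ≠ m → φ i t₀ = 0 := by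
      intro i hi
      apply tent_eq_zero
      rcases lt_or_gt_of_ne (fun h => hi (Fin.val_injective h)) with h | h
      · right
        have hc : ((i:ℕ):ℝ) + 1 ≤ ((m:ℕ):ℝ) := by exact_mod_cast h
        rw [ht₀def, show (2 * ((i:ℕ):ℝ) + 2) / D = (4 * ((i:ℕ):ℝ) + 4) / (2 * D) by
          rw [div_eq_div_iff hD.ne' (by positivity)]; ring]
        rw [div_le_div_iff_of_pos_right (by positivity)]
        linarith
      · left
        have hc : ((m:ℕ):ℝ) + 1 ≤ ((i:ℕ):ℝ) := by exact_mod_cast h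
        rw [ht₀def, show (2 * ((i:ℕ):ℝ) + 1) / D = (4 * ((i:ℕ):ℝ) + 2) / (2 * D) by
          rw [div_eq_div_iff hD.ne' (by positivity)]; ring]
        rw [div_le_div_iff_of_pos_right (by positivity)]
        linarith
    -- φ i (1 - t₀) = 0 for all i
    have hφrefl : ∀ i : Fin (k + 1), φ i (1 - t₀) = 0 := by
      intro i
      apply tent_eq_zero
      right
      have hik : ((i:ℕ):ℝ) ≤ k := by exact_mod_cast i.is_le
      rw [ht₀def, le_sub_iff_add_le]
      have e : (2 * ((i:ℕ):ℝ) + 2) / D + (4 * ((m:ℕ):ℝ) + 3) / (2 * D)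
          = (4 * ((i:ℕ):ℝ) + 4 * ((m:ℕ):ℝ) + 7) / (2 * D) := by
        field_simp
        ring
      rw [e, div_le_one (by positivity), hDdef]
      linarith
    have hct₀ : c t₀ = a m * (1 / (2 * D)) := by
      rw [hcdef]
      simp only
      rw [Finset.sum_eq_single m]
      · rw [hψdef]; simp only
        rw [hφm, hφrefl m]; ring
      · intro i _ hi
        rw [hψdef]; simp only
        rw [hφi i hi, hφrefl i]; ring
      · intro h; exact absurd (Finset.mem_univ m) h
    have hct₀ne : c t₀ ≠ 0 := by
      rw [hct₀]
      exact mul_ne_zero hm (by positivity)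
    refine ⟨t₀, ht₀mem, ?_⟩
    intro h
    have : c t₀ • v = (- c t₀) • v := by
      rw [← hcskew t₀]; exact h
    have h2 : (c t₀ - (- c t₀)) • v = 0 := by
      rw [sub_smul, this, sub_self]
    rcases smul_eq_zero.mp h2 with h3 | h3
    · rw [sub_neg_eq_add] at h3
      exact hct₀ne (by linarith)
    · exact hvne h3
end

section
/- Let X be a topological space with base point x₀ admitting a nonconstant path μ : [0,1] → X with μ(0) = x₀. Then the inclusion of ΩX ∖ Ω_tf into ΩX is a homotopy equivalence, where ΩX is the space of loops at x₀ and Ω_tf is the subspace of loops α with α = α⋆. -/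
open Set unitInterval

noncomputable section

namespace Stmt8Aux

variable {X : Type} [TopologicalSpace X]

/-- clamp to `[0,1]` -/
def pI (r : ℝ) : unitInterval := Set.projIcc 0 1 zero_le_one r

lemma coe_pI {r : ℝ} (h0 : 0 ≤ r) (h1 : r ≤ 1) : ((pI r : unitInterval) : ℝ) = r := by
  rw [pI, Set.projIcc_of_mem _ ⟨h0, h1⟩]

lemma pI_coe (t : unitInterval) : pI (t : ℝ) = t :=
  Subtype.ext (coe_pI t.2.1 t.2.2)

lemma pI_zero : pI (0 : ℝ) = 0 := Subtype.ext (coe_pI le_rfl zero_le_one)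

lemma pI_of_one_le {r : ℝ} (h : 1 ≤ r) : pI r = 1 := by
  apply Subtype.ext
  show max 0 (min 1 r) = 1
  rw [min_eq_left h, max_eq_right zero_le_one]

/-- The core deformation: at time `s`, do `μ` (scaled) out-and-back, then `α`, then rest. -/
def gRaw (μ : C(unitInterval, X)) (s : unitInterval) (α : C(unitInterval, X))
    (t : unitInterval) : X :=
  if (t : ℝ) ≤ (s : ℝ) / 5 then μ (pI (5 * (t : ℝ)))
  else if (t : ℝ) ≤ 2 * (s : ℝ) / 5 then μ (pI (2 * (s : ℝ) - 5 * (t : ℝ)))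
  else α (pI (((t : ℝ) - 2 * (s : ℝ) / 5) / (1 - 4 * (s : ℝ) / 5)))

abbrev Loop (x₀ : X) := {α : C(unitInterval, X) // α 0 = x₀ ∧ α 1 = x₀}

lemma continuous_gRaw (x₀ : X) (μ : C(unitInterval, X)) (hμ0 : μ 0 = x₀) :
    Continuous fun q : (unitInterval × Loop x₀) × unitInterval =>
      gRaw μ q.1.1 q.1.2.1 q.2 := by
  have hs : Continuous fun q : (unitInterval × Loop x₀) × unitInterval => ((q.1.1 : unitInterval) : ℝ) :=
    continuous_subtype_val.comp (continuous_fst.comp continuous_fst)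
  have ht : Continuous fun q : (unitInterval × Loop x₀) × unitInterval => ((q.2 : unitInterval) : ℝ) :=
    continuous_subtype_val.comp continuous_snd
  have hα : Continuous fun q : (unitInterval × Loop x₀) × unitInterval => (q.1.2.1 : C(unitInterval, X)) :=
    continuous_subtype_val.comp (continuous_snd.comp continuous_fst)
  have hden : ∀ q : (unitInterval × Loop x₀) × unitInterval,
      (1 : ℝ) - 4 * ((q.1.1 : unitInterval) : ℝ) / 5 ≠ 0 := by
    intro q
    have := (q.1.1 : unitInterval).2.2
    intro hcon; rw [sub_eq_zero] at hcon; nlinarith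
  unfold gRaw
  apply Continuous.if_le
  · exact μ.continuous.comp (continuous_projIcc.comp (by fun_prop))
  · apply Continuous.if_le
    · exact μ.continuous.comp (continuous_projIcc.comp (by fun_prop))
    · refine Continuous.eval hα (continuous_projIcc.comp ?_)
      exact (ht.sub ((continuous_const.mul hs).div_const 5)).div
        (continuous_const.sub ((continuous_const.mul hs).div_const 5)) hden
    · exact ht
    · exact (continuous_const.mul hs).div_const 5
    · intro q hq
      have e1 : 2 * ((q.1.1 : unitInterval) : ℝ) - 5 * ((q.2 : unitInterval) : ℝ) = 0 := by
        rw [hq]; ring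
      have e2 : (((q.2 : unitInterval) : ℝ) - 2 * ((q.1.1 : unitInterval) : ℝ) / 5) /
          (1 - 4 * ((q.1.1 : unitInterval) : ℝ) / 5) = 0 := by
        rw [hq, sub_self, zero_div]
      rw [e1, e2, pI_zero]
      simp [hμ0, q.1.2.2.1]
  · exact ht
  · exact hs.div_const 5
  · intro q hq
    have h1 : (5 : ℝ) * ((q.2 : unitInterval) : ℝ) = ((q.1.1 : unitInterval) : ℝ) := by
      rw [hq]; ring
    have h2 : ((q.2 : unitInterval) : ℝ) ≤ 2 * ((q.1.1 : unitInterval) : ℝ) / 5 := by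
      rw [hq]; have := (q.1.1 : unitInterval).2.1; linarith
    rw [if_pos h2, h1]
    congr 2
    ring

variable {x₀ : X} {μ : C(unitInterval, X)}

lemma gRaw_apply_zero (hμ0 : μ 0 = x₀) (s : unitInterval) (α : C(unitInterval, X)) :
    gRaw μ s α 0 = x₀ := by
  have h : ((0 : unitInterval) : ℝ) ≤ (s : ℝ) / 5 := by
    have := s.2.1; simp; linarith
  rw [gRaw, if_pos h]
  simp only [Icc.coe_zero, mul_zero, pI_zero, hμ0]

lemma gRaw_apply_one (s : unitInterval) (α : C(unitInterval, X)) (hα1 : α 1 = x₀) :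
    gRaw μ s α 1 = x₀ := by
  have hs0 := s.2.1; have hs1 := s.2.2
  have h1 : ¬ ((1 : unitInterval) : ℝ) ≤ (s : ℝ) / 5 := by simp; linarith
  have h2 : ¬ ((1 : unitInterval) : ℝ) ≤ 2 * (s : ℝ) / 5 := by simp; linarith
  rw [gRaw, if_neg h1, if_neg h2]
  have hc : (0 : ℝ) < 1 - 4 * (s : ℝ) / 5 := by linarith
  have : (1 : ℝ) ≤ (((1 : unitInterval) : ℝ) - 2 * (s : ℝ) / 5) / (1 - 4 * (s : ℝ) / 5) := by
    rw [le_div_iff₀ hc]; simp; linarith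
  rw [pI_of_one_le this, hα1]

/-- evaluation of `gRaw` on the middle segment recovers `α`. -/
lemma gRaw_eval (hμ0 : μ 0 = x₀) (s : unitInterval) (α : C(unitInterval, X))
    (hα0 : α 0 = x₀) (u : unitInterval) :
    gRaw μ s α (pI (2 * (s : ℝ) / 5 + (u : ℝ) * (1 - 4 * (s : ℝ) / 5))) = α u := by
  have hs0 := s.2.1; have hs1 := s.2.2
  have hu0 := u.2.1; have hu1 := u.2.2
  have hc : (1 : ℝ) / 5 ≤ 1 - 4 * (s : ℝ) / 5 := by linarith
  have huc : 0 ≤ (u : ℝ) * (1 - 4 * (s : ℝ) / 5) := mul_nonneg hu0 (by linarith)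
  have huc' : 0 ≤ (1 - (u : ℝ)) * (1 - 4 * (s : ℝ) / 5) :=
    mul_nonneg (by linarith) (by linarith)
  have hr0 : 0 ≤ 2 * (s : ℝ) / 5 + (u : ℝ) * (1 - 4 * (s : ℝ) / 5) := by linarith
  have hr1 : 2 * (s : ℝ) / 5 + (u : ℝ) * (1 - 4 * (s : ℝ) / 5) ≤ 1 := by nlinarith
  have hcoe := coe_pI hr0 hr1
  rw [gRaw, hcoe]
  by_cases h1 : 2 * (s : ℝ) / 5 + (u : ℝ) * (1 - 4 * (s : ℝ) / 5) ≤ (s : ℝ) / 5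
  · -- forces s = 0 and u = 0
    have hs : (s : ℝ) = 0 := le_antisymm (by linarith) hs0
    have hu : (u : ℝ) = 0 := by
      rw [hs] at h1
      exact le_antisymm (by linarith) hu0
    rw [if_pos h1, hs, hu]
    norm_num [pI_zero, hμ0]
    rw [show u = 0 from Subtype.ext hu, hα0]
  · by_cases h2 : 2 * (s : ℝ) / 5 + (u : ℝ) * (1 - 4 * (s : ℝ) / 5) ≤ 2 * (s : ℝ) / 5
    · have hu : (u : ℝ) = 0 := by
        have h3 : (u : ℝ) * (1 - 4 * (s : ℝ) / 5) ≤ 0 := by linarith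
        nlinarith
      have e : 2 * (s : ℝ) - 5 * (2 * (s : ℝ) / 5 + (u : ℝ) * (1 - 4 * (s : ℝ) / 5)) = 0 := by
        rw [hu]; ring
      rw [if_neg h1, if_pos h2, e, pI_zero, hμ0,
        show u = 0 from Subtype.ext hu, hα0]
    · have e : (2 * (s : ℝ) / 5 + (u : ℝ) * (1 - 4 * (s : ℝ) / 5) - 2 * (s : ℝ) / 5) /
          (1 - 4 * (s : ℝ) / 5) = (u : ℝ) := by
        have hne : (1 : ℝ) - 4 * (s : ℝ) / 5 ≠ 0 := by linarith
        rw [add_sub_cancel_left, mul_div_cancel_right₀ _ hne]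
      rw [if_neg h1, if_neg h2, e, pI_coe]

lemma symm_pI_eval (s u : unitInterval) :
    unitInterval.symm (pI (2 * (s : ℝ) / 5 + (u : ℝ) * (1 - 4 * (s : ℝ) / 5)))
      = pI (2 * (s : ℝ) / 5 + ((unitInterval.symm u : unitInterval) : ℝ) * (1 - 4 * (s : ℝ) / 5)) := by
  have hs0 := s.2.1; have hs1 := s.2.2
  have hu0 := u.2.1; have hu1 := u.2.2
  have hc : (1 : ℝ) / 5 ≤ 1 - 4 * (s : ℝ) / 5 := by linarith
  have huc : 0 ≤ (u : ℝ) * (1 - 4 * (s : ℝ) / 5) := mul_nonneg hu0 (by linarith)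
  have hr0 : (0:ℝ) ≤ 2 * (s : ℝ) / 5 + (u : ℝ) * (1 - 4 * (s : ℝ) / 5) := by linarith
  have hr1 : 2 * (s : ℝ) / 5 + (u : ℝ) * (1 - 4 * (s : ℝ) / 5) ≤ 1 := by nlinarith
  have hv0 : (0:ℝ) ≤ 2 * (s : ℝ) / 5 + (1 - (u : ℝ)) * (1 - 4 * (s : ℝ) / 5) := by nlinarith
  have hv1 : 2 * (s : ℝ) / 5 + (1 - (u : ℝ)) * (1 - 4 * (s : ℝ) / 5) ≤ 1 := by nlinarith
  apply Subtype.ext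
  rw [unitInterval.coe_symm_eq, coe_pI hr0 hr1,
    show ((unitInterval.symm u : unitInterval) : ℝ) = 1 - (u : ℝ) from unitInterval.coe_symm_eq u,
    coe_pI hv0 hv1]
  ring

/-- if the deformed loop is time-symmetric, then so was the original. -/
lemma key_symm (hμ0 : μ 0 = x₀) (s : unitInterval) (α : C(unitInterval, X))
    (hα0 : α 0 = x₀)
    (h : ∀ t, gRaw μ s α (unitInterval.symm t) = gRaw μ s α t) :
    ∀ t, α (unitInterval.symm t) = α t := by
  intro u
  have hA := gRaw_eval hμ0 s α hα0 u
  have hA' := gRaw_eval hμ0 s α hα0 (unitInterval.symm u)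
  calc α (unitInterval.symm u)
      = gRaw μ s α (pI (2 * (s : ℝ) / 5 + ((unitInterval.symm u : unitInterval) : ℝ) * (1 - 4 * (s : ℝ) / 5))) := hA'.symm
    _ = gRaw μ s α (unitInterval.symm (pI (2 * (s : ℝ) / 5 + (u : ℝ) * (1 - 4 * (s : ℝ) / 5)))) := by
        rw [symm_pI_eval]
    _ = gRaw μ s α (pI (2 * (s : ℝ) / 5 + (u : ℝ) * (1 - 4 * (s : ℝ) / 5))) := h _
    _ = α u := hA

/-- at `s = 1`, the deformed loop is never time-symmetric (since `μ` is nonconstant). -/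
lemma key_nonsymm (hμ0 : μ 0 = x₀) (hμ : ∃ t, μ t ≠ x₀)
    (α : C(unitInterval, X)) (hα1 : α 1 = x₀) :
    ¬ ∀ t, gRaw μ 1 α (unitInterval.symm t) = gRaw μ 1 α t := by
  intro h
  obtain ⟨v, hv⟩ := hμ
  apply hv
  have hv0 := v.2.1; have hv1 := v.2.2
  have hco : ((1 : unitInterval) : ℝ) = 1 := rfl
  have ht0 : (0:ℝ) ≤ (v : ℝ) / 5 := by linarith
  have ht1 : (v : ℝ) / 5 ≤ 1 := by linarith
  have hcoe : ((pI ((v : ℝ) / 5) : unitInterval) : ℝ) = (v : ℝ) / 5 := coe_pI ht0 ht1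
  have E1 : gRaw μ 1 α (pI ((v : ℝ) / 5)) = μ v := by
    rw [gRaw, hcoe, if_pos (by rw [hco]; linarith)]
    rw [show (5:ℝ) * ((v : ℝ) / 5) = (v : ℝ) by ring, pI_coe]
  have E2 : gRaw μ 1 α (unitInterval.symm (pI ((v : ℝ) / 5))) = x₀ := by
    have hcoe2 : ((unitInterval.symm (pI ((v : ℝ) / 5)) : unitInterval) : ℝ) = 1 - (v : ℝ) / 5 := by
      rw [unitInterval.coe_symm_eq, hcoe]
    rw [gRaw, hcoe2, if_neg (by rw [hco]; push_neg; linarith),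
      if_neg (by rw [hco]; push_neg; linarith)]
    rw [pI_of_one_le, hα1]
    rw [hco]
    rw [le_div_iff₀ (by norm_num : (0:ℝ) < 1 - 4 * 1 / 5)]
    linarith
  rw [← E1, ← h, E2]

/-- at `s = 0`, the deformation is the identity. -/
lemma gRaw_zero_left (hμ0 : μ 0 = x₀) (α : C(unitInterval, X)) (hα0 : α 0 = x₀)
    (t : unitInterval) : gRaw μ 0 α t = α t := by
  have ht0 := t.2.1; have ht1 := t.2.2
  have hco : ((0 : unitInterval) : ℝ) = 0 := rfl
  rw [gRaw, hco]
  by_cases h1 : (t : ℝ) ≤ 0 / 5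
  · have : (t : ℝ) = 0 := le_antisymm (by linarith [h1]) ht0
    rw [if_pos h1, this]
    norm_num [pI_zero, hμ0]
    rw [show t = 0 from Subtype.ext this, hα0]
  · rw [if_neg h1, if_neg (by push_neg at h1 ⊢; linarith)]
    rw [show ((t : ℝ) - 2 * 0 / 5) / (1 - 4 * 0 / 5) = (t : ℝ) by ring, pI_coe]

end Stmt8Aux

end

/-- If `X` has a nonconstant path starting at the base point `x₀`, then the inclusion
`ΩX ∖ Ω_tf ↪ ΩX` is a homotopy equivalence. -/
theorem stmt8 (X : Type) [TopologicalSpace X] (x₀ : X)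
    (μ : C(unitInterval, X)) (hμ0 : μ 0 = x₀) (hμ : ∃ t, μ t ≠ x₀) :
    ∃ h : ContinuousMap.HomotopyEquiv
        {a : {α : C(unitInterval, X) // α 0 = x₀ ∧ α 1 = x₀} //
          ¬ ∀ t, a.1 (unitInterval.symm t) = a.1 t}
        {α : C(unitInterval, X) // α 0 = x₀ ∧ α 1 = x₀},
      ∀ a, h.toFun a = a.1 := by
  classical
  open Stmt8Aux in
  set Ω := Loop x₀ with hΩ
  set A := {a : Loop x₀ // ¬ ∀ t, a.1 (unitInterval.symm t) = a.1 t} with hA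
  -- the bundled deformation
  let Gbig : C((unitInterval × Ω) × unitInterval, X) :=
    ⟨fun q => gRaw μ q.1.1 q.1.2.1 q.2, continuous_gRaw x₀ μ hμ0⟩
  let Gc : C(unitInterval × Ω, C(unitInterval, X)) := Gbig.curry
  have Gc_apply : ∀ (s : unitInterval) (β : Ω) (t : unitInterval),
      Gc (s, β) t = gRaw μ s β.1 t := fun s β t => rfl
  -- deformation as a map into Ω
  let GΩ : unitInterval × Ω → Ω := fun p =>
    ⟨Gc p, by rw [Gc_apply]; exact gRaw_apply_zero hμ0 _ _,
      by rw [Gc_apply]; exact gRaw_apply_one _ _ p.2.2.2⟩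
  have hGΩcont : Continuous GΩ := Gc.continuous.subtype_mk _
  -- the homotopy inverse
  let gΩ : C(Ω, Ω) := ⟨fun β => GΩ (1, β), hGΩcont.comp (Continuous.prodMk_right 1)⟩
  have hgnonsym : ∀ β : Ω, ¬ ∀ t, (gΩ β).1 (unitInterval.symm t) = (gΩ β).1 t := by
    intro β h
    exact key_nonsymm hμ0 hμ β.1 β.2.2 h
  let inv : C(Ω, A) := ⟨fun β => ⟨gΩ β, hgnonsym β⟩, (gΩ.continuous).subtype_mk _⟩
  let incl : C(A, Ω) := ⟨fun a => a.1, continuous_subtype_val⟩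
  -- homotopy in Ω from id to gΩ
  have hG0 : ∀ β : Ω, GΩ (0, β) = β := by
    intro β
    apply Subtype.ext
    apply ContinuousMap.ext
    intro t
    show Gc (0, β) t = β.1 t
    rw [Gc_apply]
    exact gRaw_zero_left hμ0 β.1 β.2.1 t
  let K : ContinuousMap.Homotopy (ContinuousMap.id Ω) gΩ :=
    { toFun := fun p => GΩ p
      continuous_toFun := hGΩcont
      map_zero_left := fun β => hG0 β
      map_one_left := fun β => rfl }
  -- homotopy in A from id to inv ∘ incl
  have hGA : ∀ (p : unitInterval × A), ¬ ∀ t, (GΩ (p.1, p.2.1)).1 (unitInterval.symm t)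
      = (GΩ (p.1, p.2.1)).1 t := by
    rintro ⟨s, a⟩ h
    apply a.2
    exact key_symm hμ0 s a.1.1 a.1.2.1 h
  let KA : ContinuousMap.Homotopy (ContinuousMap.id A) (inv.comp incl) :=
    { toFun := fun p => ⟨GΩ (p.1, p.2.1), hGA p⟩
      continuous_toFun := by
        apply Continuous.subtype_mk
        exact hGΩcont.comp (continuous_fst.prodMk (continuous_subtype_val.comp continuous_snd))
      map_zero_left := fun a => Subtype.ext (hG0 a.1)
      map_one_left := fun a => rfl }
  refine ⟨⟨incl, inv, ⟨KA.symm⟩, ⟨K.symm⟩⟩, fun a => rfl⟩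
end
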